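/- Let A be an even N×N matrix (A^i_j = 0 when [i] ≠ [j]) of the Type-1 form: A = Σ_i x_i e^i_i + Σ_{j∈Y} y_j e^{σ(j)}_j with Y = [1,b₋] ∪ [b₊, b₊+b₋−1], σ(i) = b₊+b₋−i, x_i = λ+μ for i ∈ [1,b₋], x_i = λ for i ∈ (b₋,b₊), x_i = 0 for i ∈ [b₊,N], and y_i y_{σ(i)} = −λμ ≠ 0, where σ preserves parity. Then A satisfies the reflection equation Š A₂ Š A₂ = A₂ Š A₂ Š with the GL-type graded braid matrix Š. -/
import Mathlib


open Matrix

noncomputable def sEnt (N : ℕ) (p : Fin N → ℕ) (q : ℂ) (i k : Fin N) : ℂ :=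
  if i < k then q - q⁻¹
  else if i = k then ((-1 : ℂ)) ^ (p i) * (if p i % 2 = 0 then q else q⁻¹)
  else 0

/-- The GL-type graded braid matrix. -/
noncomputable def braidS (N : ℕ) (p : Fin N → ℕ) (q : ℂ) :
    Matrix (Fin N × Fin N) (Fin N × Fin N) ℂ :=
  fun r c =>
    (if r = c then sEnt N p q r.1 r.2 else 0) +
    (if r.1 = c.2 ∧ r.2 = c.1 ∧ r.1 ≠ r.2 then ((-1 : ℂ)) ^ (p r.1 * p r.2) else 0)

/-- `A₂ = id ⊗ A`. -/
def Atwo (N : ℕ) (A : Matrix (Fin N) (Fin N) ℂ) :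
    Matrix (Fin N × Fin N) (Fin N × Fin N) ℂ :=
  fun r c => (if r.1 = c.1 then 1 else 0) * A r.2 c.2

/-- Membership of a 1-based label `k` in `Y = [1,b₋] ∪ [b₊, b₊+b₋−1]`. -/
def inY1 (bm bp k : ℕ) : Prop := (1 ≤ k ∧ k ≤ bm) ∨ (bp ≤ k ∧ k ≤ bp + bm - 1)

instance (bm bp k : ℕ) : Decidable (inY1 bm bp k) := by unfold inY1; infer_instance

/-- The Type-1 matrix, 1-based labels. -/
noncomputable def typeOne (N bm bp : ℕ) (lam mu : ℂ) (y : ℕ → ℂ) :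
    Matrix (Fin N) (Fin N) ℂ :=
  fun i j =>
    if i = j then
      (if (j : ℕ) + 1 ≤ bm then lam + mu
       else if (j : ℕ) + 1 < bp then lam else 0)
    else if ((i : ℕ) + 1) + ((j : ℕ) + 1) = bp + bm ∧ inY1 bm bp ((j : ℕ) + 1)
      then y ((j : ℕ) + 1) else 0

section helpers
variable {N : ℕ} (p : Fin N → ℕ) (q : ℂ) (A : Matrix (Fin N) (Fin N) ℂ)

lemma Smul_apply (M : Matrix (Fin N × Fin N) (Fin N × Fin N) ℂ) (r c : Fin N × Fin N) :
    (braidS N p q * M) r c =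
      sEnt N p q r.1 r.2 * M r c +
      (if r.1 ≠ r.2 then ((-1:ℂ))^(p r.1 * p r.2) * M (r.2, r.1) c else 0) := by
  rw [Matrix.mul_apply]
  have h : ∀ d, braidS N p q r d * M d c =
      (if r = d then sEnt N p q r.1 r.2 * M d c else 0) +
      (if d = (r.2, r.1) ∧ r.1 ≠ r.2 then ((-1:ℂ))^(p r.1 * p r.2) * M d c else 0) := by
    intro d
    unfold braidS
    rw [add_mul, ite_mul, zero_mul]
    congr 1
    by_cases h1 : r.1 = d.2 ∧ r.2 = d.1 ∧ r.1 ≠ r.2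
    · have h2 : d = (r.2, r.1) ∧ r.1 ≠ r.2 := by
        refine ⟨Prod.ext ?_ ?_, h1.2.2⟩ <;> simp [h1.1, h1.2.1]
      rw [if_pos h1, if_pos h2]
    · have h2 : ¬(d = (r.2, r.1) ∧ r.1 ≠ r.2) := by
        rintro ⟨rfl, h2⟩; exact h1 ⟨rfl, rfl, h2⟩
      rw [if_neg h1, if_neg h2, zero_mul]
  simp only [h, Finset.sum_add_distrib]
  congr 1
  · rw [Finset.sum_ite_eq Finset.univ r (fun d => sEnt N p q r.1 r.2 * M d c)]
    simp
  · by_cases h2 : r.1 = r.2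
    · simp [h2]
    · simp only [ne_eq, h2, not_false_eq_true, and_true, if_true]
      rw [Finset.sum_ite_eq' Finset.univ (r.2, r.1) (fun d => ((-1:ℂ))^(p r.1 * p r.2) * M d c)]
      simp

lemma mulS_apply (M : Matrix (Fin N × Fin N) (Fin N × Fin N) ℂ) (r c : Fin N × Fin N) :
    (M * braidS N p q) r c =
      M r c * sEnt N p q c.1 c.2 +
      (if c.1 ≠ c.2 then ((-1:ℂ))^(p c.2 * p c.1) * M r (c.2, c.1) else 0) := by
  rw [Matrix.mul_apply]
  have h : ∀ d, M r d * braidS N p q d c =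
      (if d = c then M r d * sEnt N p q c.1 c.2 else 0) +
      (if d = (c.2, c.1) ∧ c.1 ≠ c.2 then ((-1:ℂ))^(p c.2 * p c.1) * M r d else 0) := by
    intro d
    unfold braidS
    rw [mul_add]
    congr 1
    · by_cases h1 : d = c
      · subst h1; rw [if_pos rfl, if_pos rfl, mul_comm]
      · rw [if_neg h1, if_neg h1, mul_zero]
    · by_cases h1 : d.1 = c.2 ∧ d.2 = c.1 ∧ d.1 ≠ d.2
      · have hd : d = (c.2, c.1) ∧ c.1 ≠ c.2 := by
          have h3 := h1.2.2
          refine ⟨Prod.ext ?_ ?_, ?_⟩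
          · simp [h1.1]
          · simp [h1.2.1]
          · intro hc; exact h3 (by rw [h1.1, h1.2.1, hc])
        rw [if_pos h1, if_pos hd, h1.1, h1.2.1, mul_comm]
      · have h2 : ¬(d = (c.2, c.1) ∧ c.1 ≠ c.2) := by
          rintro ⟨rfl, h2⟩; exact h1 ⟨rfl, rfl, fun hc => h2 hc.symm⟩
        rw [if_neg h1, if_neg h2, mul_zero]
  simp only [h, Finset.sum_add_distrib]
  congr 1
  · rw [Finset.sum_ite_eq' Finset.univ c (fun d => M r d * sEnt N p q c.1 c.2)]
    simp
  · by_cases h2 : c.1 = c.2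
    · simp [h2]
    · simp only [ne_eq, h2, not_false_eq_true, and_true, if_true]
      rw [Finset.sum_ite_eq' Finset.univ (c.2, c.1) (fun d => ((-1:ℂ))^(p c.2 * p c.1) * M r d)]
      simp

lemma A2mul_apply (M : Matrix (Fin N × Fin N) (Fin N × Fin N) ℂ) (r c : Fin N × Fin N) :
    (Atwo N A * M) r c = ∑ b, A r.2 b * M (r.1, b) c := by
  rw [Matrix.mul_apply, Fintype.sum_prod_type]
  rw [Finset.sum_eq_single r.1]
  · simp [Atwo]
  · intro d1 _ hd1
    have : ¬ (r.1 = d1) := fun h => hd1 h.symm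
    simp [Atwo, this]
  · simp

lemma B_apply (i k j l : Fin N) :
    (Atwo N A * (braidS N p q * Atwo N A)) (i, k) (j, l) =
      (if i = j then ∑ b, A k b * sEnt N p q i b * A b l else 0) +
      (if i = j then 0 else ((-1:ℂ))^(p i * p j) * A k j * A i l) := by
  rw [A2mul_apply]
  have h : ∀ b, A k b * (braidS N p q * Atwo N A) (i, b) (j, l) =
      (if i = j then A k b * sEnt N p q i b * A b l else 0) +
      (if b = j ∧ i ≠ j then ((-1:ℂ))^(p i * p j) * A k j * A i l else 0) := by
    intro b
    rw [Smul_apply]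
    simp only [Atwo]
    by_cases h1 : i = j <;> by_cases h2 : b = j <;> by_cases h3 : i = b <;>
        simp [h1, h2, h3] <;> first | ring | (try subst h1) <;> (try subst h2) <;>
        (try subst h3) <;> simp_all <;> ring
  simp only [h, Finset.sum_add_distrib]
  congr 1
  · by_cases h1 : i = j <;> simp [h1]
  · by_cases h2 : i = j
    · simp [h2]
    · simp only [ne_eq, h2, not_false_eq_true, and_true]
      rw [Finset.sum_ite_eq' Finset.univ j (fun _ => ((-1:ℂ))^(p i * p j) * A k j * A i l)]
      simp

end helpers

section entries
variable {N bm bp : ℕ}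
variable (p : Fin N → ℕ) (q lam mu : ℂ) (y : ℕ → ℂ)
noncomputable def xv (bm bp : ℕ) (lam mu : ℂ) (k : ℕ) : ℂ :=
  if k ≤ bm then lam + mu else if k < bp then lam else 0

def sg (N bm bp : ℕ) (hNb : bm + bp ≤ N + 1) (hN : 1 ≤ N) (k : Fin N) : Fin N :=
  ⟨bp + bm - (↑k + 2), by have := k.isLt; omega⟩

section entries
variable {N bm bp : ℕ}
variable (p : Fin N → ℕ) (q lam mu : ℂ) (y : ℕ → ℂ)

variable {N bm bp : ℕ}
variable (p : Fin N → ℕ) (q lam mu : ℂ) (y : ℕ → ℂ)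

lemma Ysig (hbm : 1 ≤ bm) (hb : bm < bp) {a b : ℕ} (ha : inY1 bm bp a)
    (hab : a + b = bp + bm) : inY1 bm bp b := by
  unfold inY1 at *; omega

lemma Yne (hbm : 1 ≤ bm) (hb : bm < bp) {a b : ℕ} (ha : inY1 bm bp a)
    (hab : a + b = bp + bm) : a ≠ b := by
  unfold inY1 at ha; omega

lemma sg_val (hNb : bm + bp ≤ N + 1) (hN : 1 ≤ N) (hbm : 1 ≤ bm) (hb : bm < bp)
    {k : Fin N} (hk : inY1 bm bp (↑k + 1)) :
    ((sg N bm bp hNb hN k : Fin N) : ℕ) + 1 = bp + bm - (↑k + 1) := by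
  unfold inY1 at hk; simp only [sg]; omega

lemma A_diag (k : Fin N) : typeOne N bm bp lam mu y k k = xv bm bp lam mu (↑k + 1) := by
  simp [typeOne, xv]

lemma A_decomp (hbm : 1 ≤ bm) (hb : bm < bp) (k b : Fin N) :
    typeOne N bm bp lam mu y k b =
      (if b = k then xv bm bp lam mu (↑k + 1) else 0) +
      (if (↑b : ℕ) + 1 = bp + bm - (↑k + 1) ∧ inY1 bm bp (↑k + 1)
        then y (bp + bm - (↑k + 1)) else 0) := by
  by_cases hbk : b = k
  · subst hbk
    rw [if_pos rfl, A_diag]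
    have : ¬((↑b : ℕ) + 1 = bp + bm - (↑b + 1) ∧ inY1 bm bp (↑b + 1)) := by
      rintro ⟨h1, h2⟩; unfold inY1 at h2; omega
    rw [if_neg this, add_zero]
  · rw [if_neg hbk, zero_add]
    unfold typeOne
    rw [if_neg (fun h => hbk (by rw [h]))]
    by_cases hc : (↑k : ℕ) + 1 + (↑b + 1) = bp + bm ∧ inY1 bm bp (↑b + 1)
    · rw [if_pos hc, if_pos]
      · congr 1; omega
      · constructor
        · omega
        · exact Ysig hbm hb hc.2 (by omega)
    · rw [if_neg hc, if_neg]
      rintro ⟨h1, h2⟩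
      have hk1 : (↑k : ℕ) + 1 ≤ bp + bm - 1 := by unfold inY1 at h2; omega
      have hsum : (↑k : ℕ) + 1 + (bp + bm - (↑k + 1)) = bp + bm := by omega
      have hy' : inY1 bm bp (↑b + 1) := by
        have h3 := Ysig hbm hb h2 hsum
        rwa [← h1] at h3
      exact hc ⟨by omega, hy'⟩

lemma A_anti (hbm : 1 ≤ bm) (hb : bm < bp) {k l : Fin N}
    (h : (↑k : ℕ) + 1 + (↑l + 1) = bp + bm)
    (h2 : inY1 bm bp (↑l + 1)) : typeOne N bm bp lam mu y k l = y (↑l + 1) := by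
  unfold typeOne
  rw [if_neg, if_pos ⟨h, h2⟩]
  intro he
  exact Yne hbm hb h2 (by omega : (↑l:ℕ)+1 + (↑k+1) = bp+bm) (by rw [he])

lemma A_zero {k l : Fin N} (hne : k ≠ l)
    (h : ¬((↑k : ℕ) + 1 + (↑l + 1) = bp + bm ∧ inY1 bm bp (↑l + 1))) :
    typeOne N bm bp lam mu y k l = 0 := by
  unfold typeOne
  rw [if_neg hne, if_neg h]

lemma Dval (hNb : bm + bp ≤ N + 1) (hN : 1 ≤ N) (hbm : 1 ≤ bm) (hb : bm < bp)
    (i k l : Fin N) :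
    ∑ b, typeOne N bm bp lam mu y k b * sEnt N p q i b * typeOne N bm bp lam mu y b l =
      xv bm bp lam mu (↑k + 1) * sEnt N p q i k * typeOne N bm bp lam mu y k l +
      (if inY1 bm bp (↑k + 1) then
        y (bp + bm - (↑k + 1)) * sEnt N p q i (sg N bm bp hNb hN k) *
          typeOne N bm bp lam mu y (sg N bm bp hNb hN k) l
       else 0) := by
  have h : ∀ b, typeOne N bm bp lam mu y k b * sEnt N p q i b * typeOne N bm bp lam mu y b l =
      (if b = k then xv bm bp lam mu (↑k + 1) * sEnt N p q i b * typeOne N bm bp lam mu y b l else 0) +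
      (if b = sg N bm bp hNb hN k ∧ inY1 bm bp (↑k + 1)
        then y (bp + bm - (↑k + 1)) * sEnt N p q i b * typeOne N bm bp lam mu y b l else 0) := by
    intro b
    rw [A_decomp lam mu y hbm hb, add_mul, add_mul]
    congr 1
    · rw [ite_mul, ite_mul, zero_mul, zero_mul]
    · rw [ite_mul, ite_mul, zero_mul, zero_mul]
      congr 1
      have heq : ((↑b : ℕ) + 1 = bp + bm - (↑k + 1) ∧ inY1 bm bp (↑k + 1)) ↔
          (b = sg N bm bp hNb hN k ∧ inY1 bm bp (↑k + 1)) := by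
        constructor
        · rintro ⟨h1, h2⟩
          refine ⟨?_, h2⟩
          have := sg_val hNb hN hbm hb (k := k) h2
          exact Fin.ext (by omega)
        · rintro ⟨rfl, h2⟩
          exact ⟨sg_val hNb hN hbm hb h2, h2⟩
      exact propext heq
  rw [Finset.sum_congr rfl (fun b _ => h b), Finset.sum_add_distrib]
  congr 1
  · rw [Finset.sum_ite_eq' Finset.univ k
      (fun b => xv bm bp lam mu (↑k + 1) * sEnt N p q i b * typeOne N bm bp lam mu y b l)]
    simp
  · by_cases h2 : inY1 bm bp (↑k + 1)
    · simp only [h2, and_true]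
      rw [Finset.sum_ite_eq' Finset.univ (sg N bm bp hNb hN k)
        (fun b => y (bp + bm - (↑k + 1)) * sEnt N p q i b * typeOne N bm bp lam mu y b l)]
      simp
    · simp [h2]

lemma sEnt_lt {i k : Fin N} (h : (↑i : ℕ) < ↑k) : sEnt N p q i k = q - q⁻¹ := by
  have h1 : i < k := by rw [Fin.lt_def]; exact h
  unfold sEnt
  rw [if_pos h1]

lemma sEnt_gt {i k : Fin N} (h : (↑k : ℕ) < ↑i) : sEnt N p q i k = 0 := by
  have h1 : ¬ i < k := by rw [Fin.lt_def]; omega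
  have h2 : i ≠ k := by intro he; subst he; omega
  unfold sEnt
  rw [if_neg h1, if_neg h2]

lemma sEnt_diag (i : Fin N) :
    sEnt N p q i i = ((-1:ℂ)) ^ (p i) * (if p i % 2 = 0 then q else q⁻¹) := by
  simp [sEnt]

lemma xv_le {k : ℕ} (h : k ≤ bm) : xv bm bp lam mu k = lam + mu := by
  unfold xv; rw [if_pos h]
lemma xv_mid {k : ℕ} (h1 : bm < k) (h2 : k < bp) : xv bm bp lam mu k = lam := by
  unfold xv; rw [if_neg (by omega), if_pos h2]
lemma xv_ge {k : ℕ} (hb : bm < bp) (h : bp ≤ k) : xv bm bp lam mu k = 0 := by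
  unfold xv; rw [if_neg (by omega), if_neg (by omega)]

lemma diag_sq {n : ℕ} (hn : n ≤ 1) (hq : q ≠ 0) :
    (((-1:ℂ)) ^ n * (if n % 2 = 0 then q else q⁻¹)) * (((-1:ℂ)) ^ n * (if n % 2 = 0 then q else q⁻¹))
      = 1 + (q - q⁻¹) * (((-1:ℂ)) ^ n * (if n % 2 = 0 then q else q⁻¹)) := by
  have hq' : q⁻¹ * q = 1 := inv_mul_cancel₀ hq
  interval_cases n
  · norm_num
    linear_combination hq'
  · norm_num
    linear_combination hq'

lemma epsq (a : ℕ) : ((-1:ℂ)) ^ a * ((-1:ℂ)) ^ a = 1 := by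
  rw [← mul_pow]; simp

end entries

end entries

section cores
variable {N bm bp : ℕ}
variable (p : Fin N → ℕ) (q lam mu : ℂ) (y : ℕ → ℂ)

lemma sEnt_diag' {i k : Fin N} (h : (↑i : ℕ) = ↑k) :
    sEnt N p q i k = ((-1:ℂ)) ^ (p i) * (if p i % 2 = 0 then q else q⁻¹) := by
  have h2 : i = k := Fin.ext h
  subst h2; exact sEnt_diag p q i

lemma fne {i k : Fin N} (h : (↑i : ℕ) ≠ ↑k) : ¬ i = k := fun hh => h (congrArg Fin.val hh)

lemma core1 (hNb : bm + bp ≤ N + 1) (hN : 1 ≤ N) (hbm : 1 ≤ bm) (hb : bm < bp)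
    (hp : ∀ i, p i ≤ 1) (hq : q ≠ 0)
    (i k l : Fin N) :
    sEnt N p q i k * (∑ b, typeOne N bm bp lam mu y k b * sEnt N p q i b * typeOne N bm bp lam mu y b l)
      + (if i = k then 0 else xv bm bp lam mu (↑i + 1) * typeOne N bm bp lam mu y k l)
    = sEnt N p q i l * (∑ b, typeOne N bm bp lam mu y k b * sEnt N p q i b * typeOne N bm bp lam mu y b l)
      + (if i = l then 0 else xv bm bp lam mu (↑i + 1) * typeOne N bm bp lam mu y k l) := by
  by_cases hkl : k = l
  · subst hkl; rfl
  rw [Dval p q lam mu y hNb hN hbm hb]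
  by_cases hP : (↑k : ℕ) + 1 + (↑l + 1) = bp + bm ∧ inY1 bm bp (↑l + 1)
  · obtain ⟨hc, hlY⟩ := hP
    have hkY : inY1 bm bp (↑k + 1) := Ysig hbm hb hlY (by omega)
    have hsg : sg N bm bp hNb hN k = l := by
      have := sg_val hNb hN hbm hb hkY
      exact Fin.ext (by omega)
    have hyk : bp + bm - (↑k + 1) = ↑l + 1 := by omega
    rw [if_pos hkY, hsg, hyk, A_anti lam mu y hbm hb hc hlY, A_diag]
    unfold inY1 at hlY
    rcases hlY with ⟨h1, h2⟩ | ⟨h1, h2⟩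
    · -- l' ≤ bm, k' ≥ bp, l < k
      have hxk : xv bm bp lam mu (↑k + 1) = 0 := xv_ge lam mu hb (by omega)
      have hxl : xv bm bp lam mu (↑l + 1) = lam + mu := xv_le lam mu h2
      have hlk : (↑l : ℕ) < ↑k := by omega
      rw [hxk, hxl]
      rcases lt_trichotomy (↑i : ℕ) (↑l : ℕ) with hio | hio | hio
      · rw [if_neg (fne (by omega : (↑i:ℕ) ≠ ↑k)), if_neg (fne (by omega : (↑i:ℕ) ≠ ↑l)),
          sEnt_lt p q hio, sEnt_lt p q (by omega)]
        try ring
      · rw [if_neg (fne (by omega : (↑i:ℕ) ≠ ↑k)), if_pos (Fin.ext hio),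
          sEnt_lt p q (by omega : (↑i:ℕ) < ↑k), sEnt_diag' p q hio, hio, hxl]
        have := diag_sq q (hp i) hq
        linear_combination (-(lam + mu)) * y (↑l + 1) * this
      · rcases lt_trichotomy (↑i : ℕ) (↑k : ℕ) with hio2 | hio2 | hio2
        · rw [if_neg (fne (by omega : (↑i:ℕ) ≠ ↑k)), if_neg (fne (by omega : (↑i:ℕ) ≠ ↑l)),
            sEnt_lt p q hio2, sEnt_gt p q hio]
          try ring
        · rw [if_pos (Fin.ext hio2), if_neg (fne (by omega : (↑i:ℕ) ≠ ↑l)),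
            sEnt_gt p q hio, sEnt_diag' p q hio2, hio2, hxk]
          try ring
        · rw [if_neg (fne (by omega : (↑i:ℕ) ≠ ↑k)), if_neg (fne (by omega : (↑i:ℕ) ≠ ↑l)),
            sEnt_gt p q hio, sEnt_gt p q hio2]
          try ring
    · -- l' ≥ bp, k' ≤ bm, k < l
      have hxk : xv bm bp lam mu (↑k + 1) = lam + mu := xv_le lam mu (by omega)
      have hxl : xv bm bp lam mu (↑l + 1) = 0 := xv_ge lam mu hb (by omega)
      have hlk : (↑k : ℕ) < ↑l := by omega
      rw [hxk, hxl]
      rcases lt_trichotomy (↑i : ℕ) (↑k : ℕ) with hio | hio | hio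
      · rw [if_neg (fne (by omega : (↑i:ℕ) ≠ ↑k)), if_neg (fne (by omega : (↑i:ℕ) ≠ ↑l)),
          sEnt_lt p q hio, sEnt_lt p q (by omega : (↑i:ℕ) < ↑l)]
        try ring
      · rw [if_pos (Fin.ext hio), if_neg (fne (by omega : (↑i:ℕ) ≠ ↑l)),
          sEnt_lt p q (by omega : (↑i:ℕ) < ↑l), sEnt_diag' p q hio, hio, hxk]
        have := diag_sq q (hp i) hq
        linear_combination (lam + mu) * y (↑l + 1) * this
      · rcases lt_trichotomy (↑i : ℕ) (↑l : ℕ) with hio2 | hio2 | hio2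
        · rw [if_neg (fne (by omega : (↑i:ℕ) ≠ ↑k)), if_neg (fne (by omega : (↑i:ℕ) ≠ ↑l)),
            sEnt_lt p q hio2, sEnt_gt p q hio]
          try ring
        · rw [if_neg (fne (by omega : (↑i:ℕ) ≠ ↑k)), if_pos (Fin.ext hio2),
            sEnt_gt p q hio, sEnt_diag' p q hio2, hio2, hxl]
          try ring
        · rw [if_neg (fne (by omega : (↑i:ℕ) ≠ ↑k)), if_neg (fne (by omega : (↑i:ℕ) ≠ ↑l)),
            sEnt_gt p q hio, sEnt_gt p q hio2]
          try ring
  · have hAkl : typeOne N bm bp lam mu y k l = 0 := A_zero lam mu y hkl hP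
    have hAsg : ∀ hkY : inY1 bm bp (↑k + 1), typeOne N bm bp lam mu y (sg N bm bp hNb hN k) l = 0 := by
      intro hkY
      have hsv := sg_val hNb hN hbm hb hkY
      apply A_zero
      · intro h
        rw [h] at hsv
        exact hP ⟨by omega, Ysig hbm hb hkY (by unfold inY1 at hkY; omega)⟩
      · rintro ⟨h1, h2⟩
        have : (↑l : ℕ) + 1 = ↑k + 1 := by unfold inY1 at hkY; omega
        exact hkl (Fin.ext (by omega)).symm
    rw [hAkl]
    by_cases hkY : inY1 bm bp (↑k + 1)
    · rw [if_pos hkY, hAsg hkY]; simp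
    · rw [if_neg hkY]; simp

lemma core2a (hNb : bm + bp ≤ N + 1) (hN : 1 ≤ N) (hbm : 1 ≤ bm) (hb : bm < bp)
    (hp : ∀ i, p i ≤ 1) (hq : q ≠ 0)
    (hy : ∀ m, inY1 bm bp m → y m * y (bp + bm - m) = -(lam * mu))
    (hpar : ∀ i j : Fin N, ((i : ℕ) + 1) + ((j : ℕ) + 1) = bp + bm →
      inY1 bm bp ((j : ℕ) + 1) → p i = p j)
    (i k : Fin N) (hik : (↑i : ℕ) < ↑k) :
    sEnt N p q i k * (xv bm bp lam mu (↑k + 1) * xv bm bp lam mu (↑i + 1))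
      + (∑ b, typeOne N bm bp lam mu y i b * sEnt N p q k b * typeOne N bm bp lam mu y b i)
    = sEnt N p q k i * (xv bm bp lam mu (↑k + 1) * xv bm bp lam mu (↑i + 1))
      + (∑ b, typeOne N bm bp lam mu y k b * sEnt N p q i b * typeOne N bm bp lam mu y b k) := by
  rw [Dval p q lam mu y hNb hN hbm hb k i i, Dval p q lam mu y hNb hN hbm hb i k k,
    A_diag, A_diag, sEnt_lt p q hik, sEnt_gt p q hik]
  by_cases hYi : inY1 bm bp (↑i + 1)
  · have hsgi : ((sg N bm bp hNb hN i : Fin N) : ℕ) + 1 = bp + bm - (↑i + 1) :=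
      sg_val hNb hN hbm hb hYi
    have hiC : (↑i : ℕ) + 1 ≤ bp + bm - 1 := by unfold inY1 at hYi; omega
    have hAsgi : typeOne N bm bp lam mu y (sg N bm bp hNb hN i) i = y (↑i + 1) :=
      A_anti lam mu y hbm hb (by omega) hYi
    rw [if_pos hYi, hAsgi]
    by_cases hYk : inY1 bm bp (↑k + 1)
    · have hsgk : ((sg N bm bp hNb hN k : Fin N) : ℕ) + 1 = bp + bm - (↑k + 1) :=
        sg_val hNb hN hbm hb hYk
      have hkC : (↑k : ℕ) + 1 ≤ bp + bm - 1 := by unfold inY1 at hYk; omega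
      have hAsgk : typeOne N bm bp lam mu y (sg N bm bp hNb hN k) k = y (↑k + 1) :=
        A_anti lam mu y hbm hb (by omega) hYk
      rw [if_pos hYk, hAsgk]
      -- both in Y; i < k so either both ≤ bm, or i ≤ bm ≤ bp ≤ k, or both ≥ bp
      have hYi' := hYi; have hYk' := hYk
      unfold inY1 at hYi' hYk'
      rcases hYk' with ⟨hk1, hk2⟩ | ⟨hk1, hk2⟩
      · -- k' ≤ bm hence i' ≤ bm : C1
        have hxk : xv bm bp lam mu (↑k + 1) = lam + mu := xv_le lam mu hk2
        have hxi : xv bm bp lam mu (↑i + 1) = lam + mu := xv_le lam mu (by omega)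
        rw [hxk, hxi, sEnt_lt p q (show (↑k:ℕ) < ↑(sg N bm bp hNb hN i) by omega),
          sEnt_lt p q (show (↑i:ℕ) < ↑(sg N bm bp hNb hN k) by omega)]
        linear_combination (q - q⁻¹) * (hy (↑i+1) hYi) - (q - q⁻¹) * (hy (↑k+1) hYk)
      · -- k' ≥ bp
        rcases hYi' with ⟨hi1, hi2⟩ | ⟨hi1, hi2⟩
        · -- i' ≤ bm, k' ≥ bp : C3
          have hxk : xv bm bp lam mu (↑k + 1) = 0 := xv_ge lam mu hb hk1
          have hxi : xv bm bp lam mu (↑i + 1) = lam + mu := xv_le lam mu hi2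
          rw [hxk, hxi]
          rcases lt_trichotomy ((↑k : ℕ) + 1) (bp + bm - (↑i + 1)) with hcmp | hcmp | hcmp
          · rw [sEnt_lt p q (show (↑k:ℕ) < ↑(sg N bm bp hNb hN i) by omega),
              sEnt_lt p q (show (↑i:ℕ) < ↑(sg N bm bp hNb hN k) by omega)]
            linear_combination (q - q⁻¹) * (hy (↑i+1) hYi) - (q - q⁻¹) * (hy (↑k+1) hYk)
          · have hpik : p i = p k := hpar i k (by omega) hYk
            rw [sEnt_diag' p q (show (↑k:ℕ) = ↑(sg N bm bp hNb hN i) by omega),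
              sEnt_diag' p q (show (↑i:ℕ) = ↑(sg N bm bp hNb hN k) by omega), hpik]
            have e1 : bp + bm - (↑i + 1) = ↑k + 1 := by omega
            have e2 : bp + bm - (↑k + 1) = ↑i + 1 := by omega
            rw [e1, e2]
            ring
          · rw [sEnt_gt p q (show ↑(sg N bm bp hNb hN i) < (↑k:ℕ) by omega),
              sEnt_gt p q (show ↑(sg N bm bp hNb hN k) < (↑i:ℕ) by omega)]
            ring
        · -- i' ≥ bp, k' ≥ bp : C6
          have hxk : xv bm bp lam mu (↑k + 1) = 0 := xv_ge lam mu hb hk1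
          have hxi : xv bm bp lam mu (↑i + 1) = 0 := xv_ge lam mu hb hi1
          rw [hxk, hxi,
            sEnt_gt p q (show ↑(sg N bm bp hNb hN i) < (↑k:ℕ) by omega),
            sEnt_gt p q (show ↑(sg N bm bp hNb hN k) < (↑i:ℕ) by omega)]
          ring
    · -- i ∈ Y, k ∉ Y : i' ≤ bm and bm < k' (k' < bp or k' = c .. no: k ∉ Y)
      rw [if_neg hYk]
      have hYi' := hYi; unfold inY1 at hYi' hYk
      rcases hYi' with ⟨hi1, hi2⟩ | ⟨hi1, hi2⟩
      · -- i' ≤ bm; k' ∉ Y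
        have hxi : xv bm bp lam mu (↑i + 1) = lam + mu := xv_le lam mu hi2
        rcases lt_or_ge ((↑k:ℕ) + 1) bp with hkp | hkp
        · -- C2 : bm < k' < bp
          have hxk : xv bm bp lam mu (↑k + 1) = lam := xv_mid lam mu (by omega) hkp
          rw [hxk, hxi,
            sEnt_lt p q (show (↑k:ℕ) < ↑(sg N bm bp hNb hN i) by omega)]
          linear_combination (q - q⁻¹) * (hy (↑i+1) hYi)
        · -- k' ≥ bp but k ∉ Y : k' > c - 1, impossible with i' ≤ bm? no: k' ≥ c is possible
          have hxk : xv bm bp lam mu (↑k + 1) = 0 := xv_ge lam mu hb hkp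
          have hkbig : bp + bm - 1 < (↑k:ℕ) + 1 := by omega
          rw [hxk, hxi,
            sEnt_gt p q (show ↑(sg N bm bp hNb hN i) < (↑k:ℕ) by omega)]
          ring
      · -- i' ≥ bp, i ∈ Y, k ∉ Y, i < k: k' > c-1
        have hxi : xv bm bp lam mu (↑i + 1) = 0 := xv_ge lam mu hb hi1
        have hxk : xv bm bp lam mu (↑k + 1) = 0 := xv_ge lam mu hb (by omega)
        rw [hxk, hxi,
          sEnt_gt p q (show ↑(sg N bm bp hNb hN i) < (↑k:ℕ) by omega)]
        ring
  · rw [if_neg hYi]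
    by_cases hYk : inY1 bm bp (↑k + 1)
    · have hsgk : ((sg N bm bp hNb hN k : Fin N) : ℕ) + 1 = bp + bm - (↑k + 1) :=
        sg_val hNb hN hbm hb hYk
      rw [if_pos hYk]
      -- i ∉ Y, k ∈ Y, i < k: cases on k region
      unfold inY1 at hYi hYk
      rcases hYk with ⟨hk1, hk2⟩ | ⟨hk1, hk2⟩
      · -- k' ≤ bm: then i' < k' ≤ bm would put i ∈ Y: contradiction
        exact absurd rfl (by omega : ¬ (0:ℕ) = 0)
      · -- k' ∈ [bp, c-1]; i ∉ Y: bm < i'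
        have hxk : xv bm bp lam mu (↑k + 1) = 0 := xv_ge lam mu hb hk1
        rw [hxk,
          sEnt_gt p q (show ↑(sg N bm bp hNb hN k) < (↑i:ℕ) by omega)]
        ring
    · -- neither in Y
      rw [if_neg hYk]
      unfold inY1 at hYi hYk
      -- x values: both mid or k' ≥ bp mid/zero
      rcases lt_or_ge ((↑k:ℕ) + 1) bp with hkp | hkp
      · have hxk : xv bm bp lam mu (↑k + 1) = lam := xv_mid lam mu (by omega) hkp
        have hxi : xv bm bp lam mu (↑i + 1) = lam := xv_mid lam mu (by omega) (by omega)
        rw [hxk, hxi]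
        ring
      · have hxk : xv bm bp lam mu (↑k + 1) = 0 := xv_ge lam mu hb hkp
        rw [hxk]
        ring

lemma zer1 (hik : ¬ i = k) (hil : ¬ i = l) (hkl : ¬ k = l) :
    typeOne N bm bp lam mu y k l * typeOne N bm bp lam mu y i k = 0 := by
  by_cases h : (↑i : ℕ) + 1 + (↑k + 1) = bp + bm ∧ inY1 bm bp (↑k + 1)
  · have : typeOne N bm bp lam mu y k l = 0 := by
      apply A_zero lam mu y hkl
      rintro ⟨h1, h2⟩
      exact hil (Fin.ext (by omega))
    rw [this, zero_mul]
  · rw [A_zero lam mu y hik h, mul_zero]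

lemma zer2 (hij : ¬ i = j) (hkj : ¬ k = j) (hik : ¬ i = k) :
    typeOne N bm bp lam mu y i j * typeOne N bm bp lam mu y k i = 0 := by
  by_cases h : (↑k : ℕ) + 1 + (↑i + 1) = bp + bm ∧ inY1 bm bp (↑i + 1)
  · have : typeOne N bm bp lam mu y i j = 0 := by
      apply A_zero lam mu y hij
      rintro ⟨h1, h2⟩
      exact hkj (Fin.ext (by omega))
    rw [this, zero_mul]
  · rw [A_zero lam mu y (fun hh => hik (Fin.ext (by rw [hh])).symm) h, mul_zero]

lemma core2b (hNb : bm + bp ≤ N + 1) (hN : 1 ≤ N) (hbm : 1 ≤ bm) (hb : bm < bp)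
    (hp : ∀ i, p i ≤ 1) (hq : q ≠ 0)
    (i k l : Fin N) (hik : ¬ i = k) (hil : ¬ i = l) :
    sEnt N p q i k * xv bm bp lam mu (↑k + 1) * typeOne N bm bp lam mu y i l
      + (∑ b, typeOne N bm bp lam mu y i b * sEnt N p q k b * typeOne N bm bp lam mu y b l)
    = xv bm bp lam mu (↑k + 1) * typeOne N bm bp lam mu y i l * sEnt N p q k l := by
  rw [Dval p q lam mu y hNb hN hbm hb k i l]
  by_cases hP : (↑i : ℕ) + 1 + (↑l + 1) = bp + bm ∧ inY1 bm bp (↑l + 1)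
  · obtain ⟨hc, hlY⟩ := hP
    have hiY : inY1 bm bp (↑i + 1) := Ysig hbm hb hlY (by omega)
    have hsgi : ((sg N bm bp hNb hN i : Fin N) : ℕ) + 1 = bp + bm - (↑i + 1) :=
      sg_val hNb hN hbm hb hiY
    have hsg : sg N bm bp hNb hN i = l := Fin.ext (by omega)
    have hyc : bp + bm - (↑i + 1) = ↑l + 1 := by omega
    rw [if_pos hiY, hsg, hyc, A_anti lam mu y hbm hb hc hlY, A_diag]
    have hlY' := hlY; unfold inY1 at hlY'
    rcases hlY' with ⟨h1, h2⟩ | ⟨h1, h2⟩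
    · -- l' ≤ bm, i' ≥ bp, l < i
      have hxi : xv bm bp lam mu (↑i + 1) = 0 := xv_ge lam mu hb (by omega)
      have hxl : xv bm bp lam mu (↑l + 1) = lam + mu := xv_le lam mu h2
      have hli : (↑l : ℕ) < ↑i := by omega
      rw [hxi, hxl]
      rcases lt_trichotomy (↑k : ℕ) (↑l : ℕ) with ho | ho | ho
      · rw [sEnt_gt p q (by omega : (↑k:ℕ) < ↑i), sEnt_lt p q ho,
          xv_le lam mu (by omega : (↑k:ℕ) + 1 ≤ bm)]
        ring
      · rw [sEnt_gt p q (by omega : (↑k:ℕ) < ↑i), sEnt_diag' p q ho,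
          show (↑k:ℕ) + 1 = ↑l + 1 by omega, hxl]
        ring
      · rcases lt_trichotomy (↑k : ℕ) (↑i : ℕ) with ho2 | ho2 | ho2
        · rw [sEnt_gt p q ho2, sEnt_gt p q ho]
          ring
        · exact absurd (Fin.ext ho2).symm hik
        · rw [sEnt_lt p q ho2, sEnt_gt p q ho,
            xv_ge lam mu hb (by omega : bp ≤ (↑k:ℕ) + 1)]
          ring
    · -- l' ≥ bp, i' ≤ bm, i < l
      have hxi : xv bm bp lam mu (↑i + 1) = lam + mu := xv_le lam mu (by omega)
      have hxl : xv bm bp lam mu (↑l + 1) = 0 := xv_ge lam mu hb (by omega)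
      have hli : (↑i : ℕ) < ↑l := by omega
      rw [hxi, hxl]
      rcases lt_trichotomy (↑k : ℕ) (↑i : ℕ) with ho | ho | ho
      · rw [sEnt_gt p q ho, sEnt_lt p q (by omega : (↑k:ℕ) < ↑l), sEnt_lt p q ho,
          xv_le lam mu (by omega : (↑k:ℕ) + 1 ≤ bm)]
        ring
      · exact absurd (Fin.ext ho).symm hik
      · rcases lt_trichotomy (↑k : ℕ) (↑l : ℕ) with ho2 | ho2 | ho2
        · rw [sEnt_lt p q ho, sEnt_lt p q ho2, sEnt_gt p q ho]
          ring
        · rw [sEnt_lt p q ho, sEnt_diag' p q ho2, sEnt_gt p q ho,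
            show (↑k:ℕ) + 1 = ↑l + 1 by omega, hxl]
          ring
        · rw [sEnt_lt p q ho, sEnt_gt p q ho2, sEnt_gt p q ho,
            xv_ge lam mu hb (by omega : bp ≤ (↑k:ℕ) + 1)]
          ring
  · have hAil : typeOne N bm bp lam mu y i l = 0 := A_zero lam mu y hil hP
    rw [hAil]
    by_cases hiY : inY1 bm bp (↑i + 1)
    · have hsgi : ((sg N bm bp hNb hN i : Fin N) : ℕ) + 1 = bp + bm - (↑i + 1) :=
        sg_val hNb hN hbm hb hiY
      have : typeOne N bm bp lam mu y (sg N bm bp hNb hN i) l = 0 := by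
        apply A_zero
        · intro h
          rw [h] at hsgi
          exact hP ⟨by omega, Ysig hbm hb hiY (by unfold inY1 at hiY; omega)⟩
        · rintro ⟨h1, h2⟩
          exact hil (Fin.ext (by unfold inY1 at hiY; omega))
      rw [if_pos hiY, this]
      ring
    · rw [if_neg hiY]
      ring

lemma core2c (hNb : bm + bp ≤ N + 1) (hN : 1 ≤ N) (hbm : 1 ≤ bm) (hb : bm < bp)
    (hp : ∀ i, p i ≤ 1) (hq : q ≠ 0)
    (i k j : Fin N) (hij : ¬ i = j) (hkj : ¬ k = j) :
    sEnt N p q i k * xv bm bp lam mu (↑i + 1) * typeOne N bm bp lam mu y k j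
    = xv bm bp lam mu (↑i + 1) * typeOne N bm bp lam mu y k j * sEnt N p q j i
      + (∑ b, typeOne N bm bp lam mu y k b * sEnt N p q i b * typeOne N bm bp lam mu y b j) := by
  rw [Dval p q lam mu y hNb hN hbm hb i k j]
  by_cases hP : (↑k : ℕ) + 1 + (↑j + 1) = bp + bm ∧ inY1 bm bp (↑j + 1)
  · obtain ⟨hc, hjY⟩ := hP
    have hkY : inY1 bm bp (↑k + 1) := Ysig hbm hb hjY (by omega)
    have hsgk : ((sg N bm bp hNb hN k : Fin N) : ℕ) + 1 = bp + bm - (↑k + 1) :=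
      sg_val hNb hN hbm hb hkY
    have hsg : sg N bm bp hNb hN k = j := Fin.ext (by omega)
    have hyc : bp + bm - (↑k + 1) = ↑j + 1 := by omega
    rw [if_pos hkY, hsg, hyc, A_anti lam mu y hbm hb hc hjY, A_diag]
    have hjY' := hjY; unfold inY1 at hjY'
    rcases hjY' with ⟨h1, h2⟩ | ⟨h1, h2⟩
    · -- j' ≤ bm, k' ≥ bp, j < k
      have hxk : xv bm bp lam mu (↑k + 1) = 0 := xv_ge lam mu hb (by omega)
      have hxj : xv bm bp lam mu (↑j + 1) = lam + mu := xv_le lam mu h2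
      have hjk : (↑j : ℕ) < ↑k := by omega
      rw [hxk, hxj]
      rcases lt_trichotomy (↑i : ℕ) (↑j : ℕ) with ho | ho | ho
      · rw [sEnt_lt p q (by omega : (↑i:ℕ) < ↑k), sEnt_gt p q ho, sEnt_lt p q ho,
          xv_le lam mu (by omega : (↑i:ℕ) + 1 ≤ bm)]
        ring
      · exact absurd (Fin.ext ho) hij
      · rcases lt_trichotomy (↑i : ℕ) (↑k : ℕ) with ho2 | ho2 | ho2
        · rw [sEnt_lt p q ho2, sEnt_lt p q ho, sEnt_gt p q ho]
          ring
        · rw [sEnt_diag' p q ho2, sEnt_lt p q ho, sEnt_gt p q ho,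
            show (↑i:ℕ) + 1 = ↑k + 1 by omega, hxk]
          ring
        · rw [sEnt_gt p q ho2, sEnt_lt p q ho, sEnt_gt p q ho,
            xv_ge lam mu hb (by omega : bp ≤ (↑i:ℕ) + 1)]
          ring
    · -- j' ≥ bp, k' ≤ bm, k < j
      have hxk : xv bm bp lam mu (↑k + 1) = lam + mu := xv_le lam mu (by omega)
      have hxj : xv bm bp lam mu (↑j + 1) = 0 := xv_ge lam mu hb (by omega)
      have hjk : (↑k : ℕ) < ↑j := by omega
      rw [hxk, hxj]
      rcases lt_trichotomy (↑i : ℕ) (↑k : ℕ) with ho | ho | ho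
      · rw [sEnt_lt p q ho, sEnt_gt p q (by omega : (↑i:ℕ) < ↑j),
          xv_le lam mu (by omega : (↑i:ℕ) + 1 ≤ bm)]
        ring
      · rw [sEnt_diag' p q ho, sEnt_gt p q (by omega : (↑i:ℕ) < ↑j),
          show (↑i:ℕ) + 1 = ↑k + 1 by omega, hxk]
        ring
      · rcases lt_trichotomy (↑i : ℕ) (↑j : ℕ) with ho2 | ho2 | ho2
        · rw [sEnt_gt p q ho, sEnt_gt p q ho2, sEnt_lt p q ho2]
          ring
        · exact absurd (Fin.ext ho2) hij
        · rw [sEnt_gt p q ho, sEnt_lt p q ho2, sEnt_gt p q ho2,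
            xv_ge lam mu hb (by omega : bp ≤ (↑i:ℕ) + 1)]
          ring
  · have hAkj : typeOne N bm bp lam mu y k j = 0 := A_zero lam mu y hkj hP
    rw [hAkj]
    by_cases hkY : inY1 bm bp (↑k + 1)
    · have hsgk : ((sg N bm bp hNb hN k : Fin N) : ℕ) + 1 = bp + bm - (↑k + 1) :=
        sg_val hNb hN hbm hb hkY
      have : typeOne N bm bp lam mu y (sg N bm bp hNb hN k) j = 0 := by
        apply A_zero
        · intro h
          rw [h] at hsgk
          exact hP ⟨by omega, Ysig hbm hb hkY (by unfold inY1 at hkY; omega)⟩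
        · rintro ⟨h1, h2⟩
          exact hkj (Fin.ext (by unfold inY1 at hkY; omega))
      rw [if_pos hkY, this]
      ring
    · rw [if_neg hkY]
      ring

lemma core2d (hNb : bm + bp ≤ N + 1) (hN : 1 ≤ N) (hbm : 1 ≤ bm) (hb : bm < bp)
    (hpar : ∀ i j : Fin N, ((i : ℕ) + 1) + ((j : ℕ) + 1) = bp + bm →
      inY1 bm bp ((j : ℕ) + 1) → p i = p j)
    (i k j l : Fin N) (hij : ¬ i = j) (hkj : ¬ k = j) (hil : ¬ i = l) :
    sEnt N p q i k * (((-1:ℂ)) ^ (p i * p j) * typeOne N bm bp lam mu y k j * typeOne N bm bp lam mu y i l)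
      + (if i ≠ k then ((-1:ℂ)) ^ (p i * p k) *
          (((-1:ℂ)) ^ (p k * p j) * typeOne N bm bp lam mu y i j * typeOne N bm bp lam mu y k l) else 0)
    = ((-1:ℂ)) ^ (p i * p j) * typeOne N bm bp lam mu y k j * typeOne N bm bp lam mu y i l * sEnt N p q j l
      + (if j ≠ l then ((-1:ℂ)) ^ (p l * p j) *
          (((-1:ℂ)) ^ (p i * p l) * typeOne N bm bp lam mu y k l * typeOne N bm bp lam mu y i j) else 0) := by
  by_cases hKJ : (↑k : ℕ) + 1 + (↑j + 1) = bp + bm ∧ inY1 bm bp (↑j + 1)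
  · by_cases hIL : (↑i : ℕ) + 1 + (↑l + 1) = bp + bm ∧ inY1 bm bp (↑l + 1)
    · -- T1 supported
      by_cases hik : i = k
      · have hjl : j = l := Fin.ext (by omega : (↑j:ℕ) = ↑l)
        subst hik; subst hjl
        rw [if_neg (by simp), if_neg (by simp)]
        have hpij : p i = p j := hpar i j (by omega) hKJ.2
        rw [sEnt_diag' p q (rfl), sEnt_diag' p q (rfl), hpij]
        ring
      · have hjl : ¬ j = l := fun h => hik (Fin.ext (by subst h; omega))
        rw [if_pos (fun h => hik h), if_pos (fun h => hjl h)]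
        have hAij : typeOne N bm bp lam mu y i j = 0 := by
          apply A_zero lam mu y hij
          rintro ⟨h1, h2⟩
          exact hik (Fin.ext (by omega))
        rw [hAij]
        rcases lt_trichotomy (↑i : ℕ) (↑k : ℕ) with ho | ho | ho
        · rw [sEnt_lt p q ho, sEnt_lt p q (by omega : (↑j:ℕ) < ↑l)]
          ring
        · exact absurd (Fin.ext ho) hik
        · rw [sEnt_gt p q ho, sEnt_gt p q (by omega : (↑l:ℕ) < ↑j)]
          ring
    · have hAil : typeOne N bm bp lam mu y i l = 0 := A_zero lam mu y hil hIL
      rw [hAil]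
      by_cases hik : i = k
      · have hAkl : typeOne N bm bp lam mu y k l = 0 := by
          apply A_zero lam mu y (fun h => hil (hik.trans h))
          rintro ⟨h1, h2⟩
          exact hIL ⟨by omega, h2⟩
        rw [hAkl]
        simp
      · have hAij : typeOne N bm bp lam mu y i j = 0 := by
          apply A_zero lam mu y hij
          rintro ⟨h1, h2⟩
          exact hik (Fin.ext (by omega))
        rw [hAij]
        simp
  · have hAkj : typeOne N bm bp lam mu y k j = 0 := A_zero lam mu y hkj hKJ
    rw [hAkj]
    by_cases hIJ : (↑i : ℕ) + 1 + (↑j + 1) = bp + bm ∧ inY1 bm bp (↑j + 1)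
    · by_cases hkl : k = l
      · subst hkl
        have hik : ¬ i = k := fun h => hil h
        have hjk : ¬ j = k := fun h => hkj h.symm
        rw [if_pos hik, if_pos hjk]
        ring
      · by_cases hKL : (↑k : ℕ) + 1 + (↑l + 1) = bp + bm ∧ inY1 bm bp (↑l + 1)
        · have hpij : p i = p j := hpar i j hIJ.1 hIJ.2
          have hpkl : p k = p l := hpar k l hKL.1 hKL.2
          by_cases hik : i = k
          · have hjl : j = l := Fin.ext (by omega : (↑j:ℕ) = ↑l)
            rw [if_neg (by simp [hik]), if_neg (by simp [hjl])]
            simp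
          · have hjl : ¬ j = l := fun h => hik (Fin.ext (by subst h; omega))
            rw [if_pos (fun h => hik h), if_pos (fun h => hjl h), hpij, hpkl]
            ring
        · have hAkl : typeOne N bm bp lam mu y k l = 0 := A_zero lam mu y hkl hKL
          rw [hAkl]
          simp
    · have hAij : typeOne N bm bp lam mu y i j = 0 := A_zero lam mu y hij hIJ
      rw [hAij]
      simp

lemma epsq2 (a b : ℕ) : ((-1:ℂ)) ^ (a * b) * ((-1:ℂ)) ^ (b * a) = 1 := by
  rw [Nat.mul_comm b a, ← mul_pow]
  norm_num

end cores

/-- an even Type-1 matrix solves the reflection equation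
`Š A₂ Š A₂ = A₂ Š A₂ Š` for the GL-type graded braid matrix `Š`. -/
theorem typeOne_solves_RE (N bm bp : ℕ) (hN : 1 ≤ N)
    (p : Fin N → ℕ) (hp : ∀ i, p i ≤ 1) (q : ℂ) (hq : q ≠ 0)
    (hbm : 1 ≤ bm) (hb : bm < bp) (hbN : bm + bp ≤ N + 1)
    (lam mu : ℂ) (hlm : lam * mu ≠ 0) (y : ℕ → ℂ)
    (hy : ∀ k, inY1 bm bp k → y k * y (bp + bm - k) = -(lam * mu))
    (hynz : ∀ k, inY1 bm bp k → y k ≠ 0)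
    -- σ preserves parity: `[j] = [σ(j)]` for labels summing to `b₊ + b₋`
    (hpar : ∀ i j : Fin N, ((i : ℕ) + 1) + ((j : ℕ) + 1) = bp + bm →
      inY1 bm bp ((j : ℕ) + 1) → p i = p j) :
    braidS N p q * Atwo N (typeOne N bm bp lam mu y) * braidS N p q *
        Atwo N (typeOne N bm bp lam mu y) =
      Atwo N (typeOne N bm bp lam mu y) * braidS N p q *
        Atwo N (typeOne N bm bp lam mu y) * braidS N p q := by
  have hNb : bm + bp ≤ N + 1 := by omega
  suffices key : braidS N p q * (Atwo N (typeOne N bm bp lam mu y) *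
      (braidS N p q * Atwo N (typeOne N bm bp lam mu y))) =
      (Atwo N (typeOne N bm bp lam mu y) *
        (braidS N p q * Atwo N (typeOne N bm bp lam mu y))) * braidS N p q by
    calc braidS N p q * Atwo N (typeOne N bm bp lam mu y) * braidS N p q *
        Atwo N (typeOne N bm bp lam mu y)
        = braidS N p q * (Atwo N (typeOne N bm bp lam mu y) *
            (braidS N p q * Atwo N (typeOne N bm bp lam mu y))) := by
          rw [Matrix.mul_assoc (braidS N p q * Atwo N (typeOne N bm bp lam mu y)) (braidS N p q)
            (Atwo N (typeOne N bm bp lam mu y)),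
            Matrix.mul_assoc (braidS N p q) (Atwo N (typeOne N bm bp lam mu y))
            (braidS N p q * Atwo N (typeOne N bm bp lam mu y))]
      _ = (Atwo N (typeOne N bm bp lam mu y) *
            (braidS N p q * Atwo N (typeOne N bm bp lam mu y))) * braidS N p q := key
      _ = Atwo N (typeOne N bm bp lam mu y) * braidS N p q *
            Atwo N (typeOne N bm bp lam mu y) * braidS N p q := by
          rw [← Matrix.mul_assoc (Atwo N (typeOne N bm bp lam mu y)) (braidS N p q)
            (Atwo N (typeOne N bm bp lam mu y))]
  ext r c
  obtain ⟨i, k⟩ := r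
  obtain ⟨j, l⟩ := c
  rw [Smul_apply, mulS_apply]
  rw [show ((i,k).2, (i,k).1) = (k,i) from rfl, show ((j,l).2, (j,l).1) = (l,j) from rfl]
  rw [B_apply p q (typeOne N bm bp lam mu y) i k j l,
    B_apply p q (typeOne N bm bp lam mu y) k i j l,
    B_apply p q (typeOne N bm bp lam mu y) i k l j]
  dsimp only
  by_cases hij : i = j
  · subst hij
    by_cases hik : i = k
    · subst hik
      by_cases hil : i = l
      · subst hil
        simp only [eq_self_iff_true, if_true, if_neg (show ¬ i ≠ i from by simp), if_pos (rfl : i = i)]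
        ring
      · have hil' : i ≠ l := hil
        simp only [eq_self_iff_true, if_true, if_neg (show ¬ i ≠ i from by simp), if_pos hil', if_neg hil,
          if_pos (rfl : i = i), A_diag lam mu y]
        have h1 := core1 p q lam mu y hNb hN hbm hb hp hq i i l
        rw [if_pos rfl, if_neg hil] at h1
        linear_combination h1 - (typeOne N bm bp lam mu y i l * xv bm bp lam mu (↑i + 1)) *
          epsq2 (p l) (p i)
    · have hik' : i ≠ k := hik
      have hki : ¬ k = i := fun h => hik h.symm
      by_cases hil : i = l
      · subst hil
        simp only [eq_self_iff_true, if_true, if_pos hik', if_neg (show ¬ i ≠ i from by simp), if_neg hki,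
          if_pos (rfl : i = i), A_diag lam mu y]
        have h1 := core1 p q lam mu y hNb hN hbm hb hp hq i k i
        rw [if_neg hik, if_pos rfl] at h1
        linear_combination h1 + (xv bm bp lam mu (↑i + 1) * typeOne N bm bp lam mu y k i) *
          epsq2 (p i) (p k)
      · have hil' : i ≠ l := hil
        simp only [eq_self_iff_true, if_true, if_pos hik', if_pos hil', if_neg hki, if_neg hil,
          if_pos (rfl : i = i), A_diag lam mu y]
        have h1 := core1 p q lam mu y hNb hN hbm hb hp hq i k l
        rw [if_neg hik, if_neg hil] at h1
        linear_combination h1 + (xv bm bp lam mu (↑i + 1) * typeOne N bm bp lam mu y k l) *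
          epsq2 (p i) (p k) - (typeOne N bm bp lam mu y k l * xv bm bp lam mu (↑i + 1)) *
          epsq2 (p l) (p i)
  · by_cases hkj : k = j
    · subst hkj
      have hik : ¬ i = k := hij
      have hik' : i ≠ k := hij
      have hki' : k ≠ i := fun h => hik h.symm
      by_cases hil : i = l
      · subst hil
        simp only [eq_self_iff_true, if_true, if_neg hij, if_pos hik', if_pos hki', if_pos (rfl : k = k),
          if_pos (rfl : i = i), A_diag lam mu y]
        rcases lt_trichotomy (↑i : ℕ) (↑k : ℕ) with ho | ho | ho
        · have h1 := core2a p q lam mu y hNb hN hbm hb hp hq hy hpar i k ho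
          linear_combination ((-1:ℂ)) ^ (p i * p k) * h1
        · exact absurd (Fin.ext ho) hik
        · have h1 := core2a p q lam mu y hNb hN hbm hb hp hq hy hpar k i ho
          linear_combination (-((-1:ℂ)) ^ (p i * p k)) * h1
      · have hil' : i ≠ l := hil
        simp only [eq_self_iff_true, if_true, if_neg hij, if_pos hik', if_pos (rfl : k = k), if_neg hil,
          A_diag lam mu y]
        have h1 := core2b p q lam mu y hNb hN hbm hb hp hq i k l hik hil
        by_cases hkl : k = l
        · simp only [eq_self_iff_true, if_true, if_neg (show ¬ k ≠ l from by simp [hkl])]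
          linear_combination ((-1:ℂ)) ^ (p i * p k) * h1
        · simp only [eq_self_iff_true, if_true, if_pos (show k ≠ l from hkl), if_neg hil]
          have hz := zer1 (bm := bm) (bp := bp) lam mu y hik hil hkl
          linear_combination ((-1:ℂ)) ^ (p i * p k) * h1 -
            ((-1:ℂ)) ^ (p l * p k) * ((-1:ℂ)) ^ (p i * p l) * hz
    · by_cases hil : i = l
      · subst hil
        have hji : j ≠ i := fun h => hij h.symm
        simp only [eq_self_iff_true, if_true, if_neg hij, if_neg hkj, if_pos hji, if_pos (rfl : i = i),
          A_diag lam mu y]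
        have h1 := core2c p q lam mu y hNb hN hbm hb hp hq i k j hij hkj
        by_cases hik : i = k
        · simp only [eq_self_iff_true, if_true, if_neg (show ¬ i ≠ k from by simp [hik])]
          linear_combination ((-1:ℂ)) ^ (p i * p j) * h1
        · simp only [eq_self_iff_true, if_true, if_pos (show i ≠ k from hik), if_neg hkj]
          have hz := zer2 (bm := bm) (bp := bp) lam mu y hij hkj hik
          linear_combination ((-1:ℂ)) ^ (p i * p j) * h1 +
            ((-1:ℂ)) ^ (p i * p k) * ((-1:ℂ)) ^ (p k * p j) * hz
      · simp only [eq_self_iff_true, if_true, if_neg hij, if_neg hkj, if_neg hil, zero_add]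
        have h1 := core2d p q lam mu y hNb hN hbm hb hpar i k j l hij hkj hil
        linear_combination h1
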